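/- X³_{α,θ} = ⋃_{k=0}^{p-1} (e^{iθ})^k K³_{α,θ}, where K³_{α,θ} is the attractor of the IFS {ψ₁(z) = αz, ψ₂(z) = α e^{iθ}·z̄ + α} and X³_{α,θ} = { Σ_{n≥1} δₙ ∏_{j=1}^n ξⱼ : (δₙ) ∈ W^A_θ }. -/

import Mathlib

open Complex

/-- e^{iθ} -/
noncomputable def rot (θ : ℝ) : ℂ := Complex.exp (θ * Complex.I)

/-- The digit set Δ_θ = {0, 1, e^{iθ}, …, e^{(p-1)iθ}}. -/
def Delta (θ : ℝ) (p : ℕ) : Set ℂ := insert 0 {z | ∃ k, k < p ∧ z = rot θ ^ k}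

open scoped Classical in
/-- N_j : the number of nonzero digits among positions 1,…,j. -/
noncomputable def Ncount (δ : ℕ → ℂ) (j : ℕ) : ℕ :=
  ((Finset.Icc 1 j).filter (fun m => δ m ≠ 0)).card

/-- Alternating Condition: each nonzero digit equals e^{+iθ} times the previous nonzero
digit δ_{j₀} if the count N_{j₀} of nonzero digits up to j₀ is odd, and e^{-iθ} times it
if N_{j₀} is even. Sequences are indexed from 1; index 0 is a dummy (digit 0). -/
def AC (θ : ℝ) (δ : ℕ → ℂ) : Prop :=
  ∀ j k : ℕ, j < k → δ j ≠ 0 → δ k ≠ 0 → (∀ m, j < m → m < k → δ m = 0) →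
    δ k = (if Odd (Ncount δ j) then rot θ else (rot θ)⁻¹) * δ j

/-- Membership in W^A_θ (with the convention δ 0 = 0, i.e. sequences start at index 1). -/
def Walt (θ : ℝ) (p : ℕ) (δ : ℕ → ℂ) : Prop :=
  δ 0 = 0 ∧ (∀ n, δ n ∈ Delta θ p) ∧ AC θ δ

/-- The first nonzero digit of δ is c (or δ is identically zero). -/
def FirstNonzero (δ : ℕ → ℂ) (c : ℂ) : Prop :=
  (∀ n, δ n = 0) ∨ ∃ j, δ j = c ∧ ∀ m, m < j → δ m = 0

/-- The weights ξ: ξ₁ = α and ξ_{j+1} = ξ_j if δ_j = 0, conj ξ_j otherwise. -/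
noncomputable def xi (α : ℂ) (δ : ℕ → ℂ) : ℕ → ℂ
  | 0 => α
  | j + 1 => if δ j = 0 then xi α δ j else starRingEnd ℂ (xi α δ j)

/-- X³₁ : points from alternating sequences with first nonzero digit 1. -/
noncomputable def X3one (α : ℂ) (θ : ℝ) (p : ℕ) : Set ℂ :=
  {x | ∃ δ : ℕ → ℂ, Walt θ p δ ∧ FirstNonzero δ 1 ∧
    x = ∑' n, δ n * ∏ j ∈ Finset.Icc 1 n, xi α δ j}

/-- X³_{α,θ} : points from all alternating sequences. -/
noncomputable def X3full (α : ℂ) (θ : ℝ) (p : ℕ) : Set ℂ :=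
  {x | ∃ δ : ℕ → ℂ, Walt θ p δ ∧
    x = ∑' n, δ n * ∏ j ∈ Finset.Icc 1 n, xi α δ j}

/-! ### Auxiliary lemmas -/

section Aux

lemma X3norm_rot (θ : ℝ) : ‖rot θ‖ = 1 := by
  rw [rot, Complex.norm_exp]
  simp

lemma X3rot_ne (θ : ℝ) : rot θ ≠ 0 := by
  intro h
  have := X3norm_rot θ
  rw [h] at this; simp at this

lemma X3conj_rot (θ : ℝ) : starRingEnd ℂ (rot θ) = (rot θ)⁻¹ := by
  rw [Complex.inv_def]
  have : Complex.normSq (rot θ) = 1 := by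
    have := X3norm_rot θ
    rw [Complex.normSq_eq_norm_sq, this]; norm_num
  rw [this]; simp

lemma X3rot_mul_conj (θ : ℝ) : rot θ * starRingEnd ℂ (rot θ) = 1 := by
  rw [X3conj_rot, mul_inv_cancel₀ (X3rot_ne θ)]

lemma X3rot_pow_p (θ : ℝ) (p : ℕ) (q : ℤ) (hp : 0 < p)
    (hθ : θ = 2 * Real.pi * (q : ℝ) / (p : ℝ)) : rot θ ^ p = 1 := by
  rw [rot, ← Complex.exp_nat_mul]
  have hp' : (p : ℂ) ≠ 0 := Nat.cast_ne_zero.mpr hp.ne'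
  have : (p : ℂ) * (θ * Complex.I) = (q : ℂ) * (2 * Real.pi * Complex.I) := by
    rw [hθ]
    push_cast
    field_simp
  rw [this, Complex.exp_int_mul_two_pi_mul_I]

lemma X3exists_pow (θ : ℝ) (p : ℕ) (hp : 0 < p) (hrp : rot θ ^ p = 1) (m : ℤ) :
    ∃ k : ℕ, k < p ∧ rot θ ^ m = rot θ ^ k := by
  refine ⟨(m % p).toNat, ?_, ?_⟩
  · have h1 : (0 : ℤ) < p := by exact_mod_cast hp
    have := Int.emod_lt_of_pos m h1
    omega
  · have h1 : (0 : ℤ) < p := by exact_mod_cast hp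
    have hm : m = p * (m / p) + m % p := (Int.mul_ediv_add_emod m p).symm
    have hnn : 0 ≤ m % p := Int.emod_nonneg m h1.ne'
    have : rot θ ^ m = (rot θ ^ (p : ℤ)) ^ (m / p) * rot θ ^ (m % p) := by
      rw [← zpow_mul, ← zpow_add₀ (X3rot_ne θ), ← hm]
    rw [this]
    have hrp' : rot θ ^ (p : ℤ) = 1 := by rw [zpow_natCast, hrp]
    rw [hrp', one_zpow, one_mul, ← zpow_natCast]
    congr 1
    omega

end Aux
section Xi

lemma X3xi_zero (α : ℂ) (δ : ℕ → ℂ) : xi α δ 0 = α := rfl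

lemma X3xi_succ (α : ℂ) (δ : ℕ → ℂ) (j : ℕ) :
    xi α δ (j + 1) = if δ j = 0 then xi α δ j else starRingEnd ℂ (xi α δ j) := rfl

lemma X3xi_one (α : ℂ) (δ : ℕ → ℂ) (h0 : δ 0 = 0) : xi α δ 1 = α := by
  rw [X3xi_succ, if_pos h0, X3xi_zero]

lemma X3norm_xi (α : ℂ) (δ : ℕ → ℂ) (j : ℕ) : ‖xi α δ j‖ = ‖α‖ := by
  induction j with
  | zero => rfl
  | succ j ih =>
    rw [X3xi_succ]
    split_ifs
    · exact ih
    · rw [RCLike.norm_conj]; exact ih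

lemma X3xi_congr (α : ℂ) (δ δ' : ℕ → ℂ) (h : ∀ m, δ m = 0 ↔ δ' m = 0) (j : ℕ) :
    xi α δ j = xi α δ' j := by
  induction j with
  | zero => rfl
  | succ j ih =>
    rw [X3xi_succ, X3xi_succ, ih]
    by_cases hc : δ j = 0
    · rw [if_pos hc, if_pos ((h j).mp hc)]
    · rw [if_neg hc, if_neg (fun hh => hc ((h j).mpr hh))]

/-- Product of weights over `range n`, shifted. -/
noncomputable def X3Pr (α : ℂ) (δ : ℕ → ℂ) (n : ℕ) : ℂ := ∏ j ∈ Finset.range n, xi α δ (1 + j)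

lemma X3prod_Icc (α : ℂ) (δ : ℕ → ℂ) (n : ℕ) :
    ∏ j ∈ Finset.Icc 1 n, xi α δ j = X3Pr α δ n := by
  induction n with
  | zero => simp [X3Pr]
  | succ n ih =>
    rw [Finset.prod_Icc_succ_top (Nat.one_le_iff_ne_zero.mpr (Nat.succ_ne_zero n)), ih,
      X3Pr, X3Pr, Finset.prod_range_succ, Nat.add_comm 1 n]

lemma X3norm_Pr (α : ℂ) (δ : ℕ → ℂ) (n : ℕ) : ‖X3Pr α δ n‖ = ‖α‖ ^ n := by
  rw [X3Pr, norm_prod]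
  rw [Finset.prod_congr rfl (fun j _ => X3norm_xi α δ (1 + j))]
  simp

/-- The sum `S δ`. -/
noncomputable def X3S (α : ℂ) (δ : ℕ → ℂ) : ℂ :=
  ∑' n, δ n * ∏ j ∈ Finset.Icc 1 n, xi α δ j

lemma X3S_eq (α : ℂ) (δ : ℕ → ℂ) : X3S α δ = ∑' n, δ n * X3Pr α δ n := by
  unfold X3S
  exact tsum_congr fun n => by rw [X3prod_Icc]

lemma X3norm_delta (θ : ℝ) (p : ℕ) (z : ℂ) (hz : z ∈ Delta θ p) : ‖z‖ ≤ 1 := by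
  rcases hz with h | ⟨k, _, rfl⟩
  · simp [Set.mem_singleton_iff.mp h]
  · rw [norm_pow, X3norm_rot, one_pow]

lemma X3term_norm_le (α : ℂ) (θ : ℝ) (p : ℕ) (δ : ℕ → ℂ) (hδ : ∀ n, δ n ∈ Delta θ p) (n : ℕ) :
    ‖δ n * X3Pr α δ n‖ ≤ ‖α‖ ^ n := by
  rw [norm_mul, X3norm_Pr]
  calc ‖δ n‖ * ‖α‖ ^ n ≤ 1 * ‖α‖ ^ n := by
        apply mul_le_mul_of_nonneg_right (X3norm_delta θ p _ (hδ n)) (by positivity)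
    _ = ‖α‖ ^ n := one_mul _

lemma X3summable (α : ℂ) (θ : ℝ) (p : ℕ) (δ : ℕ → ℂ) (hα : ‖α‖ < 1)
    (hδ : ∀ n, δ n ∈ Delta θ p) : Summable (fun n => δ n * X3Pr α δ n) :=
  Summable.of_norm_bounded (summable_geometric_of_lt_one (norm_nonneg α) hα)
    (X3term_norm_le α θ p δ hδ)

lemma X3S_norm_le (α : ℂ) (θ : ℝ) (p : ℕ) (δ : ℕ → ℂ) (hα : ‖α‖ < 1)
    (hδ : ∀ n, δ n ∈ Delta θ p) : ‖X3S α δ‖ ≤ (1 - ‖α‖)⁻¹ := by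
  rw [X3S_eq]
  calc ‖∑' n, δ n * X3Pr α δ n‖ ≤ ∑' n, ‖α‖ ^ n := by
        apply tsum_of_norm_bounded _ (X3term_norm_le α θ p δ hδ)
        rw [tsum_geometric_of_lt_one (norm_nonneg α) hα]
        exact hasSum_geometric_of_lt_one (norm_nonneg α) hα
    _ = (1 - ‖α‖)⁻¹ := tsum_geometric_of_lt_one (norm_nonneg α) hα

lemma X3S_zero (α : ℂ) (δ : ℕ → ℂ) (h : ∀ n, δ n = 0) : X3S α δ = 0 := by
  rw [X3S_eq]
  simp [h]

end Xi
section Ncount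

open scoped Classical

lemma X3Ncount_zero (δ : ℕ → ℂ) : Ncount δ 0 = 0 := by
  simp [Ncount]

lemma X3Ncount_succ (δ : ℕ → ℂ) (j : ℕ) :
    Ncount δ (j + 1) = Ncount δ j + (if δ (j + 1) ≠ 0 then 1 else 0) := by
  unfold Ncount
  rw [show Finset.Icc 1 (j + 1) = insert (j + 1) (Finset.Icc 1 j) by
    ext m; simp only [Finset.mem_Icc, Finset.mem_insert]; omega]
  rw [Finset.filter_insert]
  split_ifs with h
  · rw [Finset.card_insert_of_notMem (by simp)]
  · simp

lemma X3Ncount_congr (δ δ' : ℕ → ℂ) (h : ∀ m, 1 ≤ m → (δ m = 0 ↔ δ' m = 0)) (j : ℕ) :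
    Ncount δ j = Ncount δ' j := by
  unfold Ncount
  congr 1
  apply Finset.filter_congr
  intro m hm
  rw [Finset.mem_Icc] at hm
  simp only [ne_eq, eq_iff_iff]
  constructor <;> intro hh heq <;> exact hh (by rw [h m hm.1] at *; assumption)

/-- Counting in a shifted sequence. -/
lemma X3Ncount_shift (δ : ℕ → ℂ) (j : ℕ) :
    Ncount δ (j + 1) = (if δ 1 ≠ 0 then 1 else 0) + Ncount (fun m => δ (m + 1)) j := by
  induction j with
  | zero =>
    rw [X3Ncount_zero]
    show Ncount δ 1 = _
    unfold Ncount
    rw [show Finset.Icc 1 1 = {1} by rfl]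
    rw [Finset.filter_singleton]
    split_ifs <;> simp
  | succ j ih =>
    rw [X3Ncount_succ, ih, X3Ncount_succ]
    ring

end Ncount
section Tail

/-- Tail of a sequence whose first digit is dropped (shift). -/
def X3sig (δ : ℕ → ℂ) : ℕ → ℂ := fun n => if n = 0 then 0 else δ (n + 1)

/-- Tail with a conjugating twist (used when the first digit is 1). -/
noncomputable def X3dd (θ : ℝ) (δ : ℕ → ℂ) : ℕ → ℂ :=
  fun n => if n = 0 then 0 else rot θ * starRingEnd ℂ (δ (n + 1))

lemma X3dd_eq_zero_iff (θ : ℝ) (δ : ℕ → ℂ) (n : ℕ) (hn : 1 ≤ n) :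
    X3dd θ δ n = 0 ↔ δ (n + 1) = 0 := by
  unfold X3dd
  rw [if_neg (by omega)]
  constructor
  · intro h
    rcases mul_eq_zero.mp h with h | h
    · exact absurd h (X3rot_ne θ)
    · simpa using h
  · intro h; rw [h]; simp

lemma X3xi_sig (α : ℂ) (δ : ℕ → ℂ) (h0 : δ 0 = 0) (h1 : δ 1 = 0) :
    ∀ j, 1 ≤ j → xi α δ (j + 1) = xi α (X3sig δ) j := by
  intro j hj
  induction j with
  | zero => omega
  | succ j ih =>
    rcases Nat.eq_zero_or_pos j with rfl | hj'
    · rw [X3xi_succ, if_pos h1, X3xi_one α δ h0, X3xi_one α (X3sig δ) rfl]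
    · rw [X3xi_succ, X3xi_succ α (X3sig δ), ih hj']
      have hs : X3sig δ j = δ (j + 1) := by unfold X3sig; rw [if_neg (by omega)]
      rw [hs]

lemma X3xi_dd (α : ℂ) (θ : ℝ) (δ : ℕ → ℂ) (h0 : δ 0 = 0) (h1 : δ 1 ≠ 0) :
    ∀ j, 1 ≤ j → xi α δ (j + 1) = starRingEnd ℂ (xi α (X3dd θ δ) j) := by
  intro j hj
  induction j with
  | zero => omega
  | succ j ih =>
    rcases Nat.eq_zero_or_pos j with rfl | hj'
    · rw [X3xi_succ, if_neg h1, X3xi_one α δ h0, X3xi_one α (X3dd θ δ) rfl]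
    · rw [X3xi_succ, X3xi_succ α (X3dd θ δ), ih hj']
      by_cases hc : δ (j + 1) = 0
      · rw [if_pos hc, if_pos (by rw [X3dd_eq_zero_iff θ δ j hj']; exact hc)]
      · rw [if_neg hc, if_neg (by rw [X3dd_eq_zero_iff θ δ j hj']; exact hc)]

/-- Recursion for the sum: case first digit zero. -/
lemma X3S_sig (α : ℂ) (θ : ℝ) (p : ℕ) (δ : ℕ → ℂ) (hα : ‖α‖ < 1)
    (hδ : ∀ n, δ n ∈ Delta θ p) (hδ' : ∀ n, X3sig δ n ∈ Delta θ p)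
    (h0 : δ 0 = 0) (h1 : δ 1 = 0) :
    X3S α δ = α * X3S α (X3sig δ) := by
  have hsum := X3summable α θ p δ hα hδ
  rw [X3S_eq, hsum.tsum_eq_zero_add]
  have hz : δ 0 * X3Pr α δ 0 = 0 := by rw [h0, zero_mul]
  rw [hz, zero_add]
  have key : ∀ n, δ (n + 1) * X3Pr α δ (n + 1) = α * (X3sig δ n * X3Pr α (X3sig δ) n) := by
    intro n
    rcases Nat.eq_zero_or_pos n with rfl | hn
    · rw [h1, zero_mul]
      unfold X3sig
      simp
    · have hPr : X3Pr α δ (n + 1) = X3Pr α (X3sig δ) n * α := by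
        unfold X3Pr
        rw [Finset.prod_range_succ']
        have : ∀ j ∈ Finset.range n, xi α δ (1 + (j + 1)) = xi α (X3sig δ) (1 + j) := by
          intro j _
          rw [show 1 + (j + 1) = (1 + j) + 1 by ring]
          exact X3xi_sig α δ h0 h1 (1 + j) (by omega)
        rw [Finset.prod_congr rfl this, X3xi_one α δ h0]
      have hval : δ (n + 1) = X3sig δ n := by unfold X3sig; rw [if_neg (by omega)]
      rw [hPr, hval]
      ring
  rw [tsum_congr key, tsum_mul_left, ← X3S_eq]

set_option maxHeartbeats 1000000 in
/-- Recursion for the sum: case first digit 1. -/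
lemma X3S_dd (α : ℂ) (θ : ℝ) (p : ℕ) (δ : ℕ → ℂ) (hα : ‖α‖ < 1)
    (hδ : ∀ n, δ n ∈ Delta θ p) (hδ' : ∀ n, X3dd θ δ n ∈ Delta θ p)
    (h0 : δ 0 = 0) (h1 : δ 1 = 1) :
    X3S α δ = α * rot θ * starRingEnd ℂ (X3S α (X3dd θ δ)) + α := by
  have hsum := X3summable α θ p δ hα hδ
  have hsum1 : Summable (fun n => δ (n + 1) * X3Pr α δ (n + 1)) :=
    (summable_nat_add_iff 1).mpr hsum
  rw [X3S_eq, hsum.tsum_eq_zero_add, hsum1.tsum_eq_zero_add]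
  have hz : δ 0 * X3Pr α δ 0 = 0 := by rw [h0, zero_mul]
  have hone : δ (0 + 1) * X3Pr α δ (0 + 1) = α := by
    rw [h1]
    unfold X3Pr
    rw [Finset.prod_range_one, X3xi_one α δ h0, one_mul]
  rw [hz, zero_add, hone]
  -- now handle the RHS
  have hsumd := X3summable α θ p (X3dd θ δ) hα hδ'
  have hconj : starRingEnd ℂ (X3S α (X3dd θ δ)) =
      ∑' n, starRingEnd ℂ (X3dd θ δ n * X3Pr α (X3dd θ δ) n) := by
    rw [X3S_eq]
    exact tsum_star
  rw [hconj, ← tsum_mul_left (a := α * rot θ)]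
  have hsumc : Summable (fun n => α * rot θ * starRingEnd ℂ (X3dd θ δ n * X3Pr α (X3dd θ δ) n)) :=
    (hsumd.star.mul_left _)
  rw [hsumc.tsum_eq_zero_add]
  have hz2 : α * rot θ * starRingEnd ℂ (X3dd θ δ 0 * X3Pr α (X3dd θ δ) 0) = 0 := by
    unfold X3dd; simp
  rw [hz2, zero_add]
  have key : ∀ n, δ (n + 1 + 1) * X3Pr α δ (n + 1 + 1) =
      α * rot θ * starRingEnd ℂ (X3dd θ δ (n + 1) * X3Pr α (X3dd θ δ) (n + 1)) := by
    intro n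
    have h1' : δ 1 ≠ 0 := by rw [h1]; exact one_ne_zero
    have hPr : X3Pr α δ (n + 2) = starRingEnd ℂ (X3Pr α (X3dd θ δ) (n + 1)) * α := by
      unfold X3Pr
      rw [Finset.prod_range_succ']
      have : ∀ j ∈ Finset.range (n + 1),
          xi α δ (1 + (j + 1)) = starRingEnd ℂ (xi α (X3dd θ δ) (1 + j)) := by
        intro j _
        rw [show 1 + (j + 1) = (1 + j) + 1 by ring]
        exact X3xi_dd α θ δ h0 h1' (1 + j) (by omega)
      rw [Finset.prod_congr rfl this, X3xi_one α δ h0, map_prod]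
    have hdd : X3dd θ δ (n + 1) = rot θ * starRingEnd ℂ (δ (n + 2)) := by
      unfold X3dd; rw [if_neg (by omega)]
    rw [hPr, hdd, map_mul, map_mul, X3conj_rot, Complex.conj_conj]
    have : α * rot θ * ((rot θ)⁻¹ * δ (n + 2) * starRingEnd ℂ (X3Pr α (X3dd θ δ) (n + 1))) =
        (rot θ * (rot θ)⁻¹) * (δ (n + 2) * (starRingEnd ℂ (X3Pr α (X3dd θ δ) (n + 1)) * α)) := by
      ring
    rw [this, mul_inv_cancel₀ (X3rot_ne θ), one_mul]
  rw [tsum_congr key]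
  ring

end Tail
section Preserve

lemma X3Ncount_one (δ : ℕ → ℂ) : Ncount δ 1 = if δ 1 ≠ 0 then 1 else 0 := by
  have h := X3Ncount_succ δ 0
  rw [X3Ncount_zero] at h
  exact h.trans (zero_add _)

lemma X3Walt_sig (θ : ℝ) (p : ℕ) (δ : ℕ → ℂ) (hw : Walt θ p δ) (h1 : δ 1 = 0) :
    Walt θ p (X3sig δ) := by
  obtain ⟨h0, hΔ, hAC⟩ := hw
  refine ⟨rfl, ?_, ?_⟩
  · intro n
    rcases Nat.eq_zero_or_pos n with rfl | hn
    · exact Set.mem_insert 0 _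
    · have : X3sig δ n = δ (n + 1) := by unfold X3sig; rw [if_neg (by omega)]
      rw [this]; exact hΔ (n + 1)
  · intro j k hjk hj hk hbet
    have hj1 : 1 ≤ j := by
      by_contra h
      exact hj (by interval_cases j <;> rfl)
    have hk1 : 1 ≤ k := by omega
    have hsj : X3sig δ j = δ (j + 1) := by unfold X3sig; rw [if_neg (by omega)]
    have hsk : X3sig δ k = δ (k + 1) := by unfold X3sig; rw [if_neg (by omega)]
    have hbet' : ∀ m, j + 1 < m → m < k + 1 → δ m = 0 := by
      intro m hm1 hm2
      have hm0 : X3sig δ (m - 1) = 0 := hbet (m - 1) (by omega) (by omega)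
      have : X3sig δ (m - 1) = δ m := by
        unfold X3sig; rw [if_neg (by omega)]; congr 1; omega
      rwa [this] at hm0
    have := hAC (j + 1) (k + 1) (by omega) (by rwa [hsj] at hj) (by rwa [hsk] at hk) hbet'
    rw [hsj, hsk, this]
    have hN : Ncount δ (j + 1) = Ncount (X3sig δ) j := by
      rw [X3Ncount_shift δ j, if_neg (by simp [h1]), zero_add]
      refine X3Ncount_congr _ _ (fun m hm => ?_) j
      have hs : X3sig δ m = δ (m + 1) := by unfold X3sig; rw [if_neg (by omega)]
      rw [hs]
    rw [hN]

lemma X3FN1_sig (δ : ℕ → ℂ) (h0 : δ 0 = 0) (hf : FirstNonzero δ 1) (h1 : δ 1 = 0) :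
    FirstNonzero (X3sig δ) 1 := by
  rcases hf with hall | ⟨j, hj1, hbelow⟩
  · left
    intro n
    rcases Nat.eq_zero_or_pos n with rfl | hn
    · rfl
    · unfold X3sig; rw [if_neg (by omega)]; exact hall (n + 1)
  · right
    have hj2 : 2 ≤ j := by
      rcases Nat.lt_or_ge j 2 with h | h
      · interval_cases j
        · rw [h0] at hj1; exact absurd hj1.symm one_ne_zero
        · rw [h1] at hj1; exact absurd hj1.symm one_ne_zero
      · exact h
    refine ⟨j - 1, ?_, ?_⟩
    · unfold X3sig
      rw [if_neg (by omega)]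
      rw [show j - 1 + 1 = j by omega]
      exact hj1
    · intro m hm
      rcases Nat.eq_zero_or_pos m with rfl | hmn
      · rfl
      · unfold X3sig
        rw [if_neg (by omega)]
        exact hbelow (m + 1) (by omega)

lemma X3rot_mul_conj_pow (θ : ℝ) (p : ℕ) (hp : 0 < p) (hrp : rot θ ^ p = 1) (k : ℕ) :
    ∃ k' : ℕ, k' < p ∧ rot θ * starRingEnd ℂ (rot θ ^ k) = rot θ ^ k' := by
  have key : rot θ * starRingEnd ℂ (rot θ ^ k) = rot θ ^ ((1 : ℤ) - k) := by
    rw [map_pow, X3conj_rot, show ((1 : ℤ) - k) = 1 + (-(k : ℤ)) by ring,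
      zpow_add₀ (X3rot_ne θ), zpow_one, zpow_neg, zpow_natCast, inv_pow]
  obtain ⟨k', hk', heq⟩ := X3exists_pow θ p hp hrp ((1 : ℤ) - k)
  exact ⟨k', hk', by rw [key, heq]⟩

lemma X3Walt_dd (θ : ℝ) (p : ℕ) (hp : 0 < p) (hrp : rot θ ^ p = 1) (δ : ℕ → ℂ)
    (hw : Walt θ p δ) (h1 : δ 1 = 1) : Walt θ p (X3dd θ δ) := by
  obtain ⟨h0, hΔ, hAC⟩ := hw
  have h1' : δ 1 ≠ 0 := by rw [h1]; exact one_ne_zero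
  refine ⟨rfl, ?_, ?_⟩
  · intro n
    rcases Nat.eq_zero_or_pos n with rfl | hn
    · exact Set.mem_insert 0 _
    · have hdd : X3dd θ δ n = rot θ * starRingEnd ℂ (δ (n + 1)) := by
        unfold X3dd; rw [if_neg (by omega)]
      rcases hΔ (n + 1) with hz | ⟨k, hk, hkeq⟩
      · rw [hdd, Set.mem_singleton_iff.mp hz]
        simp only [map_zero, mul_zero]
        exact Set.mem_insert 0 _
      · obtain ⟨k', hk', heq⟩ := X3rot_mul_conj_pow θ p hp hrp k
        right
        exact ⟨k', hk', by rw [hdd, hkeq, heq]⟩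
  · intro j k hjk hj hk hbet
    have hj1 : 1 ≤ j := by
      by_contra h
      exact hj (by interval_cases j <;> rfl)
    have hk1 : 1 ≤ k := by omega
    have hjz : δ (j + 1) ≠ 0 := fun h => hj (by rw [X3dd_eq_zero_iff θ δ j hj1]; exact h)
    have hkz : δ (k + 1) ≠ 0 := fun h => hk (by rw [X3dd_eq_zero_iff θ δ k hk1]; exact h)
    have hbet' : ∀ m, j + 1 < m → m < k + 1 → δ m = 0 := by
      intro m hm1 hm2
      have hm0 : X3dd θ δ (m - 1) = 0 := hbet (m - 1) (by omega) (by omega)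
      rw [X3dd_eq_zero_iff θ δ (m - 1) (by omega)] at hm0
      rwa [show m - 1 + 1 = m by omega] at hm0
    have hrel := hAC (j + 1) (k + 1) (by omega) hjz hkz hbet'
    have hNc : Ncount δ (j + 1) = Ncount (X3dd θ δ) j + 1 := by
      rw [X3Ncount_shift δ j, if_pos (by simp [h1]), add_comm]
      congr 1
      apply X3Ncount_congr
      intro m hm
      rw [← X3dd_eq_zero_iff θ δ m hm]
    have hddj : X3dd θ δ j = rot θ * starRingEnd ℂ (δ (j + 1)) := by
      unfold X3dd; rw [if_neg (by omega)]
    have hddk : X3dd θ δ k = rot θ * starRingEnd ℂ (δ (k + 1)) := by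
      unfold X3dd; rw [if_neg (by omega)]
    rw [hddj, hddk, hrel, hNc]
    rcases Nat.even_or_odd (Ncount (X3dd θ δ) j) with he | ho
    · rw [if_pos (Even.add_one he), if_neg (Nat.not_odd_iff_even.mpr he)]
      rw [map_mul, X3conj_rot θ]
      ring
    · rw [if_neg (by rw [Nat.odd_add_one]; exact not_not_intro ho), if_pos ho]
      rw [map_mul, map_inv₀, X3conj_rot θ, inv_inv]

end Preserve
section Preserve2

open scoped Classical

lemma X3FN1_dd (θ : ℝ) (p : ℕ) (δ : ℕ → ℂ) (hw : Walt θ p δ) (h1 : δ 1 = 1) :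
    FirstNonzero (X3dd θ δ) 1 := by
  obtain ⟨h0, hΔ, hAC⟩ := hw
  by_cases hall : ∀ m, 2 ≤ m → δ m = 0
  · left
    intro n
    rcases Nat.eq_zero_or_pos n with rfl | hn
    · rfl
    · unfold X3dd
      rw [if_neg (by omega), hall (n + 1) (by omega)]
      simp
  · right
    push_neg at hall
    have hex : ∃ m, 2 ≤ m ∧ δ m ≠ 0 := by
      obtain ⟨m, hm2, hmne⟩ := hall; exact ⟨m, hm2, hmne⟩
    set k := Nat.find hex with hkdef
    obtain ⟨hk2, hkne⟩ := Nat.find_spec hex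
    have hmin : ∀ m, m < k → ¬(2 ≤ m ∧ δ m ≠ 0) := fun m hm => Nat.find_min hex hm
    have hbet : ∀ m, 1 < m → m < k → δ m = 0 := by
      intro m hm1 hm2
      by_contra hne
      exact hmin m hm2 ⟨by omega, hne⟩
    have hrel := hAC 1 k (by omega) (by rw [h1]; exact one_ne_zero) hkne hbet
    have hN1 : Ncount δ 1 = 1 := by
      rw [X3Ncount_one, if_pos (by rw [h1]; exact one_ne_zero)]
    rw [hN1, if_pos (by decide : Odd 1), h1, mul_one] at hrel
    refine ⟨k - 1, ?_, ?_⟩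
    · unfold X3dd
      rw [if_neg (by omega), show k - 1 + 1 = k by omega, hrel, X3rot_mul_conj]
    · intro m hm
      rcases Nat.eq_zero_or_pos m with rfl | hmn
      · rfl
      · unfold X3dd
        rw [if_neg (by omega)]
        have : δ (m + 1) = 0 := by
          by_contra hne
          exact hmin (m + 1) (by omega) ⟨by omega, hne⟩
        rw [this]
        simp

lemma X3Walt_mul (θ : ℝ) (p : ℕ) (u : ℂ) (hu : u ≠ 0)
    (hD : ∀ z ∈ Delta θ p, u * z ∈ Delta θ p) (δ : ℕ → ℂ) (hw : Walt θ p δ) :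
    Walt θ p (fun n => u * δ n) := by
  obtain ⟨h0, hΔ, hAC⟩ := hw
  have hiff : ∀ m, u * δ m = 0 ↔ δ m = 0 := by
    intro m
    constructor
    · intro h
      rcases mul_eq_zero.mp h with h | h
      · exact absurd h hu
      · exact h
    · intro h; rw [h, mul_zero]
  refine ⟨by simp only []; rw [h0, mul_zero], fun n => hD _ (hΔ n), ?_⟩
  intro j k hjk hj hk hbet
  simp only at hj hk ⊢
  have hrel := hAC j k hjk (fun h => hj (by rw [h, mul_zero])) (fun h => hk (by rw [h, mul_zero]))
    (fun m hm1 hm2 => (hiff m).mp (hbet m hm1 hm2))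
  have hN : Ncount (fun n => u * δ n) j = Ncount δ j :=
    X3Ncount_congr _ _ (fun m _ => hiff m) j
  rw [hN, hrel]
  ring

lemma X3Pr_mul (α : ℂ) (u : ℂ) (hu : u ≠ 0) (δ : ℕ → ℂ) (n : ℕ) :
    X3Pr α (fun n => u * δ n) n = X3Pr α δ n := by
  unfold X3Pr
  refine Finset.prod_congr rfl (fun j _ => ?_)
  refine X3xi_congr α _ δ (fun m => ?_) (1 + j)
  constructor
  · intro h
    rcases mul_eq_zero.mp h with h | h
    · exact absurd h hu
    · exact h
  · intro h; simp only [h, mul_zero]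

lemma X3S_mul (α : ℂ) (u : ℂ) (hu : u ≠ 0) (δ : ℕ → ℂ) :
    X3S α (fun n => u * δ n) = u * X3S α δ := by
  rw [X3S_eq, X3S_eq, ← tsum_mul_left]
  refine tsum_congr (fun n => ?_)
  rw [X3Pr_mul α u hu δ n]
  ring

lemma X3Delta_mul_zpow (θ : ℝ) (p : ℕ) (hp : 0 < p) (hrp : rot θ ^ p = 1) (t : ℤ) :
    ∀ z ∈ Delta θ p, rot θ ^ t * z ∈ Delta θ p := by
  intro z hz
  rcases hz with h | ⟨k, hk, rfl⟩
  · rw [Set.mem_singleton_iff.mp h, mul_zero]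
    exact Set.mem_insert 0 _
  · obtain ⟨k', hk', heq⟩ := X3exists_pow θ p hp hrp (t + k)
    right
    refine ⟨k', hk', ?_⟩
    rw [← heq, zpow_add₀ (X3rot_ne θ), zpow_natCast]

end Preserve2
section Dec

open scoped Classical

/-- Count of `true`s among `c 0, …, c (n-1)`. -/
def X3cnt (c : ℕ → Bool) (n : ℕ) : ℕ := ((Finset.range n).filter (fun m => c m = true)).card

/-- Decoding a boolean address into an alternating digit sequence. -/
noncomputable def X3dec (θ : ℝ) (c : ℕ → Bool) : ℕ → ℂ :=
  fun n => if n = 0 then 0 else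
    if c (n - 1) then (if Odd (X3cnt c n) then 1 else rot θ) else 0

lemma X3cnt_zero (c : ℕ → Bool) : X3cnt c 0 = 0 := by simp [X3cnt]

lemma X3cnt_succ (c : ℕ → Bool) (n : ℕ) :
    X3cnt c (n + 1) = X3cnt c n + (if c n then 1 else 0) := by
  unfold X3cnt
  rw [Finset.range_add_one, Finset.filter_insert]
  split_ifs with h
  · rw [Finset.card_insert_of_notMem (by simp)]
  · simp

lemma X3dec_zero (θ : ℝ) (c : ℕ → Bool) : X3dec θ c 0 = 0 := rfl

lemma X3dec_succ (θ : ℝ) (c : ℕ → Bool) (n : ℕ) :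
    X3dec θ c (n + 1) = if c n then (if Odd (X3cnt c (n + 1)) then 1 else rot θ) else 0 := by
  unfold X3dec
  rw [if_neg (Nat.succ_ne_zero n), Nat.add_sub_cancel]

lemma X3dec_ne_zero_iff (θ : ℝ) (c : ℕ → Bool) (n : ℕ) :
    X3dec θ c (n + 1) ≠ 0 ↔ c n = true := by
  rw [X3dec_succ]
  by_cases h : c n
  · rw [if_pos h]
    simp only [h, iff_true]
    split_ifs
    · exact one_ne_zero
    · exact X3rot_ne θ
  · rw [if_neg h]
    simp [h]

lemma X3Ncount_dec (θ : ℝ) (c : ℕ → Bool) (j : ℕ) : Ncount (X3dec θ c) j = X3cnt c j := by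
  induction j with
  | zero => rw [X3Ncount_zero, X3cnt_zero]
  | succ j ih =>
    rw [X3Ncount_succ, X3cnt_succ, ih]
    congr 1
    by_cases h : c j
    · rw [if_pos ((X3dec_ne_zero_iff θ c j).mpr h), if_pos h]
    · rw [if_neg (fun hh => h ((X3dec_ne_zero_iff θ c j).mp hh)), if_neg h]

lemma X3cnt_shift (c : ℕ → Bool) (n : ℕ) :
    X3cnt c (n + 1) = (if c 0 then 1 else 0) + X3cnt (fun m => c (m + 1)) n := by
  induction n with
  | zero => rw [X3cnt_zero]; have := X3cnt_succ c 0; rw [X3cnt_zero] at this; omega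
  | succ n ih => rw [X3cnt_succ, ih, X3cnt_succ]; ring

lemma X3cnt_eq_of_false (c : ℕ → Bool) (j l : ℕ) (hjl : j ≤ l)
    (h : ∀ m, j ≤ m → m < l → c m = false) : X3cnt c l = X3cnt c j := by
  induction l, hjl using Nat.le_induction with
  | base => rfl
  | succ l hjl ih =>
    rw [X3cnt_succ, if_neg (by rw [h l hjl (by omega)]; simp), add_zero]
    exact ih (fun m hm1 hm2 => h m hm1 (by omega))

lemma X3Walt_dec (θ : ℝ) (p : ℕ) (hp : 0 < p) (hrp : rot θ ^ p = 1) (c : ℕ → Bool) :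
    Walt θ p (X3dec θ c) := by
  refine ⟨rfl, ?_, ?_⟩
  · intro n
    rcases Nat.eq_zero_or_pos n with rfl | hn
    · exact Set.mem_insert 0 _
    · obtain ⟨n', rfl⟩ : ∃ n', n = n' + 1 := ⟨n - 1, by omega⟩
      rw [X3dec_succ]
      split_ifs
      · right; exact ⟨0, hp, by rw [pow_zero]⟩
      · obtain ⟨k, hk, heq⟩ := X3exists_pow θ p hp hrp 1
        right; exact ⟨k, hk, by rw [← heq, zpow_one]⟩
      · exact Set.mem_insert 0 _
  · intro j k hjk hj hk hbet
    have hj1 : 1 ≤ j := by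
      by_contra h
      exact hj (by interval_cases j <;> rfl)
    obtain ⟨a, rfl⟩ : ∃ a, j = a + 1 := ⟨j - 1, by omega⟩
    obtain ⟨b, rfl⟩ : ∃ b, k = b + 1 := ⟨k - 1, by omega⟩
    have hca : c a = true := (X3dec_ne_zero_iff θ c a).mp hj
    have hcb : c b = true := (X3dec_ne_zero_iff θ c b).mp hk
    have hab : a + 1 ≤ b := by omega
    have hcntb : X3cnt c b = X3cnt c (a + 1) := by
      apply X3cnt_eq_of_false c (a + 1) b hab
      intro m hm1 hm2
      have := hbet (m + 1) (by omega) (by omega)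
      by_contra hne
      exact ((X3dec_ne_zero_iff θ c m).mpr (by simpa using hne)) this
    have hcnt : X3cnt c (b + 1) = X3cnt c (a + 1) + 1 := by
      rw [X3cnt_succ, hcntb, if_pos hcb]
    rw [X3Ncount_dec, X3dec_succ, X3dec_succ, if_pos hca, if_pos hcb, hcnt]
    rcases Nat.even_or_odd (X3cnt c (a + 1)) with he | ho
    · rw [if_neg (Nat.not_odd_iff_even.mpr he), if_pos (Even.add_one he),
        if_neg (Nat.not_odd_iff_even.mpr he)]
      rw [inv_mul_cancel₀ (X3rot_ne θ)]
    · rw [if_pos ho, if_neg (by rw [Nat.odd_add_one]; exact not_not_intro ho), if_pos ho,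
        mul_one]

lemma X3FN1_dec (θ : ℝ) (c : ℕ → Bool) : FirstNonzero (X3dec θ c) 1 := by
  by_cases hex : ∃ m, c m = true
  · right
    set k := Nat.find hex with hkdef
    have hck : c k = true := Nat.find_spec hex
    have hmin : ∀ m, m < k → c m = false := by
      intro m hm
      have := Nat.find_min hex hm
      simpa using this
    refine ⟨k + 1, ?_, ?_⟩
    · rw [X3dec_succ, if_pos hck]
      have : X3cnt c (k + 1) = 1 := by
        rw [X3cnt_succ, if_pos hck, X3cnt_eq_of_false c 0 k (by omega)
          (fun m _ hm => hmin m hm), X3cnt_zero]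
      rw [this, if_pos (by decide : Odd 1)]
    · intro m hm
      rcases Nat.eq_zero_or_pos m with rfl | hmn
      · rfl
      · obtain ⟨m', rfl⟩ : ∃ m', m = m' + 1 := ⟨m - 1, by omega⟩
        rw [X3dec_succ, if_neg (by rw [hmin m' (by omega)]; simp)]
  · left
    intro n
    rcases Nat.eq_zero_or_pos n with rfl | hn
    · rfl
    · obtain ⟨n', rfl⟩ : ∃ n', n = n' + 1 := ⟨n - 1, by omega⟩
      rw [X3dec_succ, if_neg (by intro h; exact hex ⟨n', h⟩)]

lemma X3sig_dec (θ : ℝ) (c : ℕ → Bool) (h : c 0 = false) :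
    X3sig (X3dec θ c) = X3dec θ (fun m => c (m + 1)) := by
  funext n
  rcases Nat.eq_zero_or_pos n with rfl | hn
  · rfl
  · obtain ⟨m, rfl⟩ : ∃ m, n = m + 1 := ⟨n - 1, by omega⟩
    have hs : X3sig (X3dec θ c) (m + 1) = X3dec θ c (m + 2) := by
      unfold X3sig; rw [if_neg (by omega)]
    rw [hs, X3dec_succ, X3dec_succ]
    have hcnt : X3cnt c (m + 2) = X3cnt (fun m => c (m + 1)) (m + 1) := by
      rw [X3cnt_shift c (m + 1), if_neg (by rw [h]; simp), zero_add]
    rw [hcnt]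

lemma X3dd_dec (θ : ℝ) (c : ℕ → Bool) (h : c 0 = true) :
    X3dd θ (X3dec θ c) = X3dec θ (fun m => c (m + 1)) := by
  funext n
  rcases Nat.eq_zero_or_pos n with rfl | hn
  · rfl
  · obtain ⟨m, rfl⟩ : ∃ m, n = m + 1 := ⟨n - 1, by omega⟩
    have hs : X3dd θ (X3dec θ c) (m + 1) = rot θ * starRingEnd ℂ (X3dec θ c (m + 2)) := by
      unfold X3dd; rw [if_neg (by omega)]
    rw [hs, X3dec_succ, X3dec_succ]
    have hcnt : X3cnt c (m + 2) = 1 + X3cnt (fun m => c (m + 1)) (m + 1) := by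
      rw [X3cnt_shift c (m + 1), if_pos h]
    by_cases hc : c (m + 1)
    · rw [if_pos hc, if_pos hc, hcnt]
      rcases Nat.even_or_odd (X3cnt (fun m => c (m + 1)) (m + 1)) with he | ho
      · rw [if_pos (by rw [add_comm]; exact Even.add_one he), if_neg (Nat.not_odd_iff_even.mpr he)]
        simp
      · rw [if_neg (by rw [add_comm, Nat.odd_add_one]; exact not_not_intro ho), if_pos ho,
          X3rot_mul_conj]
    · rw [if_neg hc, if_neg hc]
      simp

end Dec
section Main

open Metric

/-- The two contractions, indexed by a boolean. -/
noncomputable def X3Phi (α : ℂ) (θ : ℝ) (i : Bool) (z : ℂ) : ℂ :=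
  bif i then α * rot θ * starRingEnd ℂ z + α else α * z

lemma X3Phi_false (α : ℂ) (θ : ℝ) (z : ℂ) : X3Phi α θ false z = α * z := rfl

lemma X3Phi_true (α : ℂ) (θ : ℝ) (z : ℂ) :
    X3Phi α θ true z = α * rot θ * starRingEnd ℂ z + α := rfl

lemma X3Phi_dist (α : ℂ) (θ : ℝ) (i : Bool) (a b : ℂ) :
    dist (X3Phi α θ i a) (X3Phi α θ i b) = ‖α‖ * dist a b := by
  cases i
  · rw [X3Phi_false, X3Phi_false, dist_eq_norm, dist_eq_norm, ← mul_sub, norm_mul]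
  · rw [X3Phi_true, X3Phi_true, dist_eq_norm, dist_eq_norm]
    have : α * rot θ * starRingEnd ℂ a + α - (α * rot θ * starRingEnd ℂ b + α) =
        α * rot θ * starRingEnd ℂ (a - b) := by
      rw [map_sub]; ring
    rw [this, norm_mul, norm_mul, X3norm_rot, RCLike.norm_conj, mul_one]

variable {α : ℂ} {θ : ℝ} {K : Set ℂ}

lemma X3Phi_mem (hK : K = (fun z => α * z) '' K ∪
    (fun z => α * rot θ * starRingEnd ℂ z + α) '' K) (i : Bool) {z : ℂ} (hz : z ∈ K) :
    X3Phi α θ i z ∈ K := by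
  cases i
  · rw [X3Phi_false, hK]
    exact Set.mem_union_left _ ⟨z, hz, rfl⟩
  · rw [X3Phi_true, hK]
    exact Set.mem_union_right _ ⟨z, hz, rfl⟩

lemma X3zero_mem (hα : ‖α‖ < 1) (hKne : K.Nonempty) (hKc : IsCompact K)
    (hK : K = (fun z => α * z) '' K ∪
        (fun z => α * rot θ * starRingEnd ℂ z + α) '' K) : (0 : ℂ) ∈ K := by
  obtain ⟨z₀, hz₀⟩ := hKne
  have hmem : ∀ n : ℕ, α ^ n * z₀ ∈ K := by
    intro n
    induction n with
    | zero => simpa using hz₀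
    | succ n ih =>
      have := X3Phi_mem hK false ih
      rw [X3Phi_false] at this
      rwa [pow_succ, mul_comm (α ^ n) α, mul_assoc]
  have htend : Filter.Tendsto (fun n : ℕ => α ^ n * z₀) Filter.atTop (nhds 0) := by
    have h1 : Filter.Tendsto (fun n : ℕ => α ^ n) Filter.atTop (nhds 0) :=
      tendsto_pow_atTop_nhds_zero_of_norm_lt_one hα
    simpa using h1.mul_const z₀
  exact hKc.isClosed.mem_of_tendsto htend (Filter.Eventually.of_forall hmem)

lemma X3first_digit (δ : ℕ → ℂ) (h0 : δ 0 = 0) (hfn : FirstNonzero δ 1) :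
    δ 1 = 0 ∨ δ 1 = 1 := by
  rcases hfn with hall | ⟨j, hj1, hb⟩
  · exact Or.inl (hall 1)
  · rcases Nat.lt_trichotomy j 1 with h | h | h
    · interval_cases j
      rw [h0] at hj1
      exact absurd hj1.symm one_ne_zero
    · subst h; exact Or.inr hj1
    · exact Or.inl (hb 1 h)

/-- Main Lemma 1: every alternating expansion with first digit 1 lies in K. -/
lemma X3S_mem_K (p : ℕ) (hp : 0 < p) (hrp : rot θ ^ p = 1) (hα : ‖α‖ < 1)
    (hKne : K.Nonempty) (hKc : IsCompact K)
    (hK : K = (fun z => α * z) '' K ∪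
        (fun z => α * rot θ * starRingEnd ℂ z + α) '' K)
    (δ : ℕ → ℂ) (hw : Walt θ p δ) (hfn : FirstNonzero δ 1) : X3S α δ ∈ K := by
  obtain ⟨z₀, hz₀⟩ := hKne
  obtain ⟨B, hB⟩ := isBounded_iff_forall_norm_le.mp hKc.isBounded
  set C := (1 - ‖α‖)⁻¹ + B with hC
  have hCle : ∀ (δ' : ℕ → ℂ), Walt θ p δ' → infDist (X3S α δ') K ≤ C := by
    intro δ' hw'
    calc infDist (X3S α δ') K ≤ dist (X3S α δ') z₀ := infDist_le_dist_of_mem hz₀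
      _ = ‖X3S α δ' - z₀‖ := dist_eq_norm _ _
      _ ≤ ‖X3S α δ'‖ + ‖z₀‖ := norm_sub_le _ _
      _ ≤ (1 - ‖α‖)⁻¹ + B :=
        add_le_add (X3S_norm_le α θ p δ' hα hw'.2.1) (hB z₀ hz₀)
  have key : ∀ n : ℕ, ∀ δ' : ℕ → ℂ, Walt θ p δ' → FirstNonzero δ' 1 →
      infDist (X3S α δ') K ≤ ‖α‖ ^ n * C := by
    intro n
    induction n with
    | zero => intro δ' hw' _; rw [pow_zero, one_mul]; exact hCle δ' hw'
    | succ n ih =>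
      intro δ' hw' hfn'
      rcases X3first_digit δ' hw'.1 hfn' with h1 | h1
      · -- first digit 0
        have hw2 := X3Walt_sig θ p δ' hw' h1
        have hfn2 := X3FN1_sig δ' hw'.1 hfn' h1
        have heq := X3S_sig α θ p δ' hα hw'.2.1 hw2.2.1 hw'.1 h1
        obtain ⟨y, hyK, hy⟩ := hKc.exists_infDist_eq_dist ⟨z₀, hz₀⟩ (X3S α (X3sig δ'))
        calc infDist (X3S α δ') K ≤ dist (X3S α δ') (X3Phi α θ false y) :=
              infDist_le_dist_of_mem (X3Phi_mem hK false hyK)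
          _ = dist (X3Phi α θ false (X3S α (X3sig δ'))) (X3Phi α θ false y) := by
              rw [heq]; rfl
          _ = ‖α‖ * dist (X3S α (X3sig δ')) y := X3Phi_dist α θ false _ _
          _ = ‖α‖ * infDist (X3S α (X3sig δ')) K := by rw [hy]
          _ ≤ ‖α‖ * (‖α‖ ^ n * C) :=
              mul_le_mul_of_nonneg_left (ih _ hw2 hfn2) (norm_nonneg α)
          _ = ‖α‖ ^ (n + 1) * C := by ring
      · -- first digit 1
        have hw2 := X3Walt_dd θ p hp hrp δ' hw' h1
        have hfn2 := X3FN1_dd θ p δ' hw' h1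
        have heq := X3S_dd α θ p δ' hα hw'.2.1 hw2.2.1 hw'.1 h1
        obtain ⟨y, hyK, hy⟩ := hKc.exists_infDist_eq_dist ⟨z₀, hz₀⟩ (X3S α (X3dd θ δ'))
        calc infDist (X3S α δ') K ≤ dist (X3S α δ') (X3Phi α θ true y) :=
              infDist_le_dist_of_mem (X3Phi_mem hK true hyK)
          _ = dist (X3Phi α θ true (X3S α (X3dd θ δ'))) (X3Phi α θ true y) := by
              rw [heq]; rfl
          _ = ‖α‖ * dist (X3S α (X3dd θ δ')) y := X3Phi_dist α θ true _ _
          _ = ‖α‖ * infDist (X3S α (X3dd θ δ')) K := by rw [hy]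
          _ ≤ ‖α‖ * (‖α‖ ^ n * C) :=
              mul_le_mul_of_nonneg_left (ih _ hw2 hfn2) (norm_nonneg α)
          _ = ‖α‖ ^ (n + 1) * C := by ring
  have hzero : infDist (X3S α δ) K ≤ 0 := by
    have htend : Filter.Tendsto (fun n : ℕ => ‖α‖ ^ n * C) Filter.atTop (nhds 0) := by
      have h1 := tendsto_pow_atTop_nhds_zero_of_lt_one (norm_nonneg α) hα
      simpa using h1.mul_const C
    exact ge_of_tendsto htend (Filter.Eventually.of_forall (fun n => key n δ hw hfn))
  exact (hKc.isClosed.mem_iff_infDist_zero ⟨z₀, hz₀⟩).mpr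
    (le_antisymm hzero infDist_nonneg)

/-- Recursion for decoded sums. -/
lemma X3S_dec_rec (p : ℕ) (hp : 0 < p) (hrp : rot θ ^ p = 1) (hα : ‖α‖ < 1) (c : ℕ → Bool) :
    X3S α (X3dec θ c) = X3Phi α θ (c 0) (X3S α (X3dec θ (fun m => c (m + 1)))) := by
  cases hc : c 0
  · rw [X3Phi_false]
    have h1 : X3dec θ c 1 = 0 := by
      rw [show (1 : ℕ) = 0 + 1 from rfl, X3dec_succ, if_neg (by rw [hc]; simp)]
    have heq := X3S_sig α θ p (X3dec θ c) hα (X3Walt_dec θ p hp hrp c).2.1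
      (by rw [X3sig_dec θ c hc]; exact (X3Walt_dec θ p hp hrp _).2.1) rfl h1
    rw [heq, X3sig_dec θ c hc]
  · rw [X3Phi_true]
    have h1 : X3dec θ c 1 = 1 := by
      rw [show (1 : ℕ) = 0 + 1 from rfl, X3dec_succ, if_pos hc]
      have : X3cnt c 1 = 1 := by
        rw [show (1 : ℕ) = 0 + 1 from rfl, X3cnt_succ, X3cnt_zero, if_pos hc]
      rw [this, if_pos (by decide : Odd 1)]
    have heq := X3S_dd α θ p (X3dec θ c) hα (X3Walt_dec θ p hp hrp c).2.1
      (by rw [X3dd_dec θ c hc]; exact (X3Walt_dec θ p hp hrp _).2.1) rfl h1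
    rw [heq, X3dd_dec θ c hc]

/-- Main Lemma 2: every point of K is an alternating expansion with first digit 1. -/
lemma X3K_subset (p : ℕ) (hp : 0 < p) (hrp : rot θ ^ p = 1) (hα : ‖α‖ < 1)
    (hKne : K.Nonempty) (hKc : IsCompact K)
    (hK : K = (fun z => α * z) '' K ∪
        (fun z => α * rot θ * starRingEnd ℂ z + α) '' K)
    {x : ℂ} (hx : x ∈ K) :
    ∃ δ : ℕ → ℂ, Walt θ p δ ∧ FirstNonzero δ 1 ∧ x = X3S α δ := by
  obtain ⟨B, hB⟩ := isBounded_iff_forall_norm_le.mp hKc.isBounded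
  set C := B + (1 - ‖α‖)⁻¹ with hC
  -- the key contraction estimate
  have key : ∀ n : ℕ, ∀ c : ℕ → Bool, ∀ xs : ℕ → ℂ, (∀ m, xs m ∈ K) →
      (∀ m, xs m = X3Phi α θ (c m) (xs (m + 1))) →
      ‖xs 0 - X3S α (X3dec θ c)‖ ≤ ‖α‖ ^ n * C := by
    intro n
    induction n with
    | zero =>
      intro c xs hmem hrec
      rw [pow_zero, one_mul]
      calc ‖xs 0 - X3S α (X3dec θ c)‖ ≤ ‖xs 0‖ + ‖X3S α (X3dec θ c)‖ := norm_sub_le _ _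
        _ ≤ B + (1 - ‖α‖)⁻¹ := add_le_add (hB _ (hmem 0))
            (X3S_norm_le α θ p _ hα (X3Walt_dec θ p hp hrp c).2.1)
    | succ n ih =>
      intro c xs hmem hrec
      rw [hrec 0, X3S_dec_rec p hp hrp hα c, ← dist_eq_norm, X3Phi_dist]
      calc ‖α‖ * dist (xs (0 + 1)) (X3S α (X3dec θ fun m => c (m + 1)))
          ≤ ‖α‖ * (‖α‖ ^ n * C) := by
            apply mul_le_mul_of_nonneg_left _ (norm_nonneg α)
            rw [dist_eq_norm]
            exact ih (fun m => c (m + 1)) (fun m => xs (m + 1)) (fun m => hmem (m + 1))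
              (fun m => hrec (m + 1))
        _ = ‖α‖ ^ (n + 1) * C := by ring
  -- construct the address by choice
  have hstep : ∀ z : {w : ℂ // w ∈ K}, ∃ iw : Bool × {w : ℂ // w ∈ K},
      (z : ℂ) = X3Phi α θ iw.1 (iw.2 : ℂ) := by
    rintro ⟨z, hz⟩
    have hz' : z ∈ (fun z => α * z) '' K ∪
        (fun z => α * rot θ * starRingEnd ℂ z + α) '' K := hK ▸ hz
    rcases hz' with ⟨w, hw, hweq⟩ | ⟨w, hw, hweq⟩
    · exact ⟨(false, ⟨w, hw⟩), by rw [X3Phi_false]; exact hweq.symm⟩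
    · exact ⟨(true, ⟨w, hw⟩), by rw [X3Phi_true]; exact hweq.symm⟩
  choose F hF using hstep
  set g : ℕ → {w : ℂ // w ∈ K} := fun n => (fun t => (F t).2)^[n] ⟨x, hx⟩ with hg
  set c : ℕ → Bool := fun n => (F (g n)).1 with hc
  have hg0 : ((g 0 : {w : ℂ // w ∈ K}) : ℂ) = x := rfl
  have hgsucc : ∀ n, g (n + 1) = (F (g n)).2 := by
    intro n
    rw [hg]
    exact Function.iterate_succ_apply' _ n _
  have hrec : ∀ m, ((g m : {w : ℂ // w ∈ K}) : ℂ) = X3Phi α θ (c m) ((g (m + 1) : {w : ℂ // w ∈ K}) : ℂ) := by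
    intro m
    rw [hgsucc m]
    exact hF (g m)
  have hub : ∀ n : ℕ, ‖x - X3S α (X3dec θ c)‖ ≤ ‖α‖ ^ n * C :=
    fun n => hg0 ▸ key n c (fun m => (g m : ℂ)) (fun m => (g m).2) hrec
  have hzero : ‖x - X3S α (X3dec θ c)‖ ≤ 0 := by
    have htend : Filter.Tendsto (fun n : ℕ => ‖α‖ ^ n * C) Filter.atTop (nhds 0) := by
      have h1 := tendsto_pow_atTop_nhds_zero_of_lt_one (norm_nonneg α) hα
      simpa using h1.mul_const C
    exact ge_of_tendsto htend (Filter.Eventually.of_forall hub)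
  have hxeq : x = X3S α (X3dec θ c) := by
    have := le_antisymm hzero (norm_nonneg _)
    rwa [norm_eq_zero, sub_eq_zero] at this
  exact ⟨X3dec θ c, X3Walt_dec θ p hp hrp c, X3FN1_dec θ c, hxeq⟩

end Main

/-- X³_{α,θ} = ⋃_{k=0}^{p-1} (e^{iθ})^k K³_{α,θ}. -/
theorem X3full_eq_union_rot_attractor (α : ℂ) (θ : ℝ) (p : ℕ) (q : ℤ) (hp : 0 < p)
    (hq : Nat.Coprime q.natAbs p)
    (hθ : θ = 2 * Real.pi * (q : ℝ) / (p : ℝ)) (hα0 : 0 < ‖α‖) (hα : ‖α‖ < 1)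
    (K : Set ℂ) (hKne : K.Nonempty) (hKc : IsCompact K)
    (hK : K = (fun z => α * z) '' K ∪
              (fun z => α * rot θ * starRingEnd ℂ z + α) '' K) :
    X3full α θ p = ⋃ k ∈ Finset.range p, (fun z => rot θ ^ k * z) '' K := by
  classical
  have hrp : rot θ ^ p = 1 := X3rot_pow_p θ p q hp hθ
  ext x
  simp only [X3full, Set.mem_setOf_eq]
  constructor
  · rintro ⟨δ, hw, rfl⟩
    show X3S α δ ∈ _
    by_cases hall : ∀ n, δ n = 0
    · have h0K : (0 : ℂ) ∈ K := X3zero_mem hα hKne hKc hK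
      rw [X3S_zero α δ hall]
      refine Set.mem_biUnion (Finset.mem_range.mpr hp) ?_
      exact ⟨0, h0K, by simp⟩
    · push_neg at hall
      have hex : ∃ n, δ n ≠ 0 := hall
      set j₀ := Nat.find hex with hj₀def
      have hj₀ : δ j₀ ≠ 0 := Nat.find_spec hex
      have hbelow : ∀ m, m < j₀ → δ m = 0 := fun m hm => not_not.mp (Nat.find_min hex hm)
      obtain ⟨k, hk, hkeq⟩ : ∃ k, k < p ∧ δ j₀ = rot θ ^ k := by
        rcases hw.2.1 j₀ with h | ⟨k, hk, hkeq⟩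
        · exact absurd (Set.mem_singleton_iff.mp h) hj₀
        · exact ⟨k, hk, hkeq⟩
      set u := rot θ ^ (-(k : ℤ)) with hu
      have hune : u ≠ 0 := zpow_ne_zero _ (X3rot_ne θ)
      have hD := X3Delta_mul_zpow θ p hp hrp (-(k : ℤ))
      have hw' := X3Walt_mul θ p u hune hD δ hw
      have huk : u * rot θ ^ k = 1 := by
        rw [hu, ← zpow_natCast (rot θ) k, ← zpow_add₀ (X3rot_ne θ)]
        simp
      have hfn' : FirstNonzero (fun n => u * δ n) 1 := by
        right
        refine ⟨j₀, ?_, fun m hm => ?_⟩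
        · simp only []
          rw [hkeq, huk]
        · simp only []
          rw [hbelow m hm, mul_zero]
      have hmem := X3S_mem_K p hp hrp hα hKne hKc hK _ hw' hfn'
      have hSm : X3S α (fun n => u * δ n) = u * X3S α δ := X3S_mul α u hune δ
      refine Set.mem_biUnion (Finset.mem_range.mpr hk) ?_
      refine ⟨X3S α (fun n => u * δ n), hmem, ?_⟩
      show rot θ ^ k * X3S α (fun n => u * δ n) = X3S α δ
      rw [hSm, ← mul_assoc, show rot θ ^ k * u = 1 by rw [mul_comm]; exact huk, one_mul]
  · intro hx
    obtain ⟨k, hk, hmem⟩ := Set.mem_iUnion₂.mp hx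
    obtain ⟨z, hzK, heq⟩ := hmem
    obtain ⟨δ, hw, hfn, hzeq⟩ := X3K_subset p hp hrp hα hKne hKc hK hzK
    have hune : (rot θ ^ k : ℂ) ≠ 0 := pow_ne_zero _ (X3rot_ne θ)
    have hD : ∀ w ∈ Delta θ p, rot θ ^ k * w ∈ Delta θ p := by
      intro w hwd
      have := X3Delta_mul_zpow θ p hp hrp (k : ℤ) w hwd
      rwa [zpow_natCast] at this
    have hw' := X3Walt_mul θ p _ hune hD δ hw
    refine ⟨(fun n => rot θ ^ k * δ n), hw', ?_⟩
    show x = X3S α (fun n => rot θ ^ k * δ n)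
    rw [X3S_mul α _ hune δ, ← hzeq]
    exact heq.symm
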